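/- Let p be a prime and let P ∈ ℚ_p[X] be a monic polynomial of degree l ≥ 1. Then for every ε > 0, the Haar measure of the set {z ∈ ℚ_p : |P(z)|_p < ε} is at most l·ε^{1/l}. -/

import Mathlib

open MeasureTheory
open scoped ENNReal

variable {q : ℕ} [Fact q.Prime]

noncomputable instance : MeasurableSpace ℚ_[q] := borel _
instance : BorelSpace ℚ_[q] := ⟨rfl⟩

open Polynomial

/-- The closed ball of radius `p^n` decomposes into `p` cosets of the closed ball of
radius `p^(n-1)`, hence has `p` times its measure. -/
lemma padic_step (p : ℕ) [Fact p.Prime] (μ : Measure ℚ_[p]) (hμ : μ.IsAddHaarMeasure) (n : ℤ) :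
    μ {x : ℚ_[p] | ‖x‖ ≤ (p : ℝ) ^ n} = (p : ℝ≥0∞) * μ {x : ℚ_[p] | ‖x‖ ≤ (p : ℝ) ^ (n-1)} := by
  haveI := hμ
  have hp1 : (1:ℝ) < (p:ℝ) := by exact_mod_cast (Fact.out : p.Prime).one_lt
  have hp0 : (0:ℝ) < (p:ℝ) := by positivity
  set c : ℕ → ℚ_[p] := fun i => (i : ℚ_[p]) * (p : ℚ_[p]) ^ (-n) with hc
  have hnormc : ∀ i : ℕ, ‖c i‖ ≤ (p:ℝ)^n := by
    intro i
    rw [hc]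
    simp only [norm_mul]
    rw [Padic.norm_p_zpow, neg_neg]
    have h1 : ‖(i : ℚ_[p])‖ ≤ 1 := by exact_mod_cast Padic.norm_int_le_one (i : ℤ)
    calc ‖(i : ℚ_[p])‖ * (p:ℝ)^n ≤ 1 * (p:ℝ)^n :=
          mul_le_mul_of_nonneg_right h1 (by positivity)
      _ = (p:ℝ)^n := one_mul _
  have hdecomp : {x : ℚ_[p] | ‖x‖ ≤ (p : ℝ) ^ n}
      = ⋃ i ∈ Finset.range p, {x : ℚ_[p] | ‖x - c i‖ ≤ (p : ℝ) ^ (n-1)} := by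
    ext x
    simp only [Set.mem_setOf_eq, Set.mem_iUnion, Finset.mem_range]
    constructor
    · intro hx
      have hy : ‖x * (p : ℚ_[p]) ^ n‖ ≤ 1 := by
        rw [norm_mul, Padic.norm_p_zpow]
        calc ‖x‖ * (p:ℝ)^(-n) ≤ (p:ℝ)^n * (p:ℝ)^(-n) :=
              mul_le_mul_of_nonneg_right hx (by positivity)
          _ = 1 := by rw [← zpow_add₀ (ne_of_gt hp0), add_neg_cancel, zpow_zero]
      set z : ℤ_[p] := ⟨_, hy⟩ with hz
      obtain ⟨i, hip, hmem⟩ := PadicInt.exists_mem_range (p := p) z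
      refine ⟨i, hip, ?_⟩
      rw [PadicInt.maximalIdeal_eq_span_p, Ideal.mem_span_singleton,
        ← PadicInt.norm_lt_one_iff_dvd] at hmem
      have hzn : ‖(z : ℚ_[p]) - (i:ℚ_[p])‖ ≤ (p:ℝ)^(-1 : ℤ) := by
        rw [Padic.norm_le_pow_iff_norm_lt_pow_add_one]
        rw [PadicInt.norm_def] at hmem
        simpa using hmem
      have hxc : x - c i = ((z : ℚ_[p]) - (i:ℚ_[p])) * (p : ℚ_[p]) ^ (-n) := by
        rw [hc]
        have : (z : ℚ_[p]) = x * (p : ℚ_[p]) ^ n := rfl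
        rw [this, sub_mul, mul_assoc, ← zpow_add₀
          (by exact_mod_cast (Fact.out : p.Prime).ne_zero : (p:ℚ_[p]) ≠ 0),
          add_neg_cancel, zpow_zero, mul_one]
      rw [hxc, norm_mul, Padic.norm_p_zpow, neg_neg]
      calc ‖(z : ℚ_[p]) - (i:ℚ_[p])‖ * (p:ℝ)^n ≤ (p:ℝ)^(-1:ℤ) * (p:ℝ)^n :=
            mul_le_mul_of_nonneg_right hzn (by positivity)
        _ = (p:ℝ)^(n-1) := by rw [← zpow_add₀ (ne_of_gt hp0)]; ring_nf
    · rintro ⟨i, hip, hxi⟩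
      calc ‖x‖ = ‖(x - c i) + c i‖ := by ring_nf
        _ ≤ max ‖x - c i‖ ‖c i‖ := Padic.nonarchimedean _ _
        _ ≤ (p:ℝ)^n := max_le
            (le_trans hxi (zpow_le_zpow_right₀ (le_of_lt hp1) (by omega))) (hnormc i)
  have hmeas : ∀ (a : ℚ_[p]) (r : ℝ), MeasurableSet {x : ℚ_[p] | ‖x - a‖ ≤ r} :=
    fun a r => (isClosed_le (by continuity) continuous_const).measurableSet
  have htrans : ∀ (a : ℚ_[p]) (r : ℝ), μ {x : ℚ_[p] | ‖x - a‖ ≤ r} = μ {x : ℚ_[p] | ‖x‖ ≤ r} := by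
    intro a r
    have : {x : ℚ_[p] | ‖x - a‖ ≤ r} = (fun x => -a + x) ⁻¹' {x : ℚ_[p] | ‖x‖ ≤ r} := by
      ext x; simp only [Set.mem_preimage, Set.mem_setOf_eq, neg_add_eq_sub]
    rw [this, measure_preimage_add]
  have hdisj : (↑(Finset.range p) : Set ℕ).PairwiseDisjoint
      (fun i => {x : ℚ_[p] | ‖x - c i‖ ≤ (p : ℝ) ^ (n-1)}) := by
    intro i hi j hj hij
    simp only [Finset.coe_range, Set.mem_Iio] at hi hj
    refine Set.disjoint_left.mpr fun x hxi hxj => ?_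
    simp only [Set.mem_setOf_eq] at hxi hxj
    have hcij : ‖c i - c j‖ = (p:ℝ)^n := by
      have : c i - c j = (((i:ℤ) - (j:ℤ) : ℤ) : ℚ_[p]) * (p : ℚ_[p]) ^ (-n) := by
        rw [hc]; push_cast; ring
      rw [this, norm_mul, Padic.norm_p_zpow, neg_neg]
      have hne : ¬ ((p:ℤ) ∣ ((i:ℤ) - (j:ℤ))) := by
        intro hdvd
        rcases hdvd with ⟨k, hk⟩
        have : (i:ℤ) - (j:ℤ) = 0 := by
          rcases lt_trichotomy k 0 with h|h|h
          · nlinarith [hi, hj, (Fact.out : p.Prime).two_le]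
          · simp [hk, h]
          · nlinarith [hi, hj, (Fact.out : p.Prime).two_le]
        omega
      have h1 : ‖(((i:ℤ) - (j:ℤ) : ℤ) : ℚ_[p])‖ = 1 := by
        rcases lt_or_eq_of_le (Padic.norm_int_le_one (p := p) ((i:ℤ) - (j:ℤ))) with h|h
        · exact absurd (Padic.norm_intCast_lt_one_iff.mp h) hne
        · exact h
      rw [h1, one_mul]
    have : ‖c i - c j‖ ≤ (p:ℝ)^(n-1) := by
      calc ‖c i - c j‖ = ‖(c i - x) + (x - c j)‖ := by ring_nf
        _ ≤ max ‖c i - x‖ ‖x - c j‖ := Padic.nonarchimedean _ _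
        _ ≤ (p:ℝ)^(n-1) := max_le (by rwa [norm_sub_rev]) hxj
    rw [hcij] at this
    exact absurd this (not_le.mpr (zpow_lt_zpow_right₀ hp1 (by omega)))
  rw [hdecomp, measure_biUnion_finset hdisj (fun i _ => hmeas _ _)]
  simp_rw [htrans]
  rw [Finset.sum_const, Finset.card_range, nsmul_eq_mul]

/-- The measure of the closed ball of radius `p^n` is `p^n`. -/
lemma padic_ball_meas (p : ℕ) [Fact p.Prime]
    (μ : Measure ℚ_[p]) (hμ : μ.IsAddHaarMeasure)
    (hμ1 : μ {x : ℚ_[p] | ‖x‖ ≤ 1} = 1) (n : ℤ) :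
    μ {x : ℚ_[p] | ‖x‖ ≤ (p : ℝ) ^ n} = ENNReal.ofReal ((p : ℝ) ^ n) := by
  have hp0 : (0:ℝ) < (p:ℝ) := by exact_mod_cast (Fact.out : p.Prime).pos
  have hbase : μ {x : ℚ_[p] | ‖x‖ ≤ (p : ℝ) ^ (0:ℤ)} = ENNReal.ofReal ((p : ℝ) ^ (0:ℤ)) := by
    simpa using hμ1
  have hcast : (p : ℝ≥0∞) = ENNReal.ofReal (p : ℝ) := by
    rw [ENNReal.ofReal_natCast]
  induction n using Int.induction_on with
  | zero => exact hbase
  | succ k ih =>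
      rw [padic_step p μ hμ (k+1)]
      simp only [add_sub_cancel_right]
      rw [ih, hcast, ← ENNReal.ofReal_mul (le_of_lt hp0)]
      congr 1
      rw [mul_comm, ← zpow_add_one₀ (ne_of_gt hp0)]
  | pred k ih =>
      have h := padic_step p μ hμ (-k)
      rw [ih] at h
      have hrw : (-(k:ℤ) - 1) = (-(k+1:ℕ) : ℤ) := by push_cast; ring
      rw [hrw] at h ⊢
      have h2 : (p : ℝ≥0∞) * ENNReal.ofReal ((p:ℝ) ^ (-(k+1:ℕ) : ℤ))
          = ENNReal.ofReal ((p : ℝ) ^ (-(k:ℤ))) := by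
        rw [hcast, ← ENNReal.ofReal_mul (le_of_lt hp0)]
        congr 1
        have : (-(k:ℤ)) = (-(k+1:ℕ) : ℤ) + 1 := by push_cast; ring
        rw [this, zpow_add_one₀ (ne_of_gt hp0), mul_comm]
      rw [← h2] at h
      have hpne0 : (p : ℝ≥0∞) ≠ 0 := by exact_mod_cast (Fact.out : p.Prime).ne_zero
      have hpnetop : (p : ℝ≥0∞) ≠ ⊤ := ENNReal.natCast_ne_top p
      have e1 : μ {x : ℚ_[p] | ‖x‖ ≤ (p:ℝ) ^ (-(k+1:ℕ) : ℤ)}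
          = ((p : ℝ≥0∞) * ENNReal.ofReal ((p:ℝ) ^ (-(k+1:ℕ) : ℤ))) / (p : ℝ≥0∞) :=
        (ENNReal.eq_div_iff hpne0 hpnetop).mpr h.symm
      rw [e1, mul_comm, mul_div_assoc, ENNReal.div_self hpne0 hpnetop, mul_one]

/-- The measure of any open ball of radius `δ` is at most `δ`. -/
lemma padic_open_ball_meas (p : ℕ) [Fact p.Prime]
    (μ : Measure ℚ_[p]) (hμ : μ.IsAddHaarMeasure)
    (hμ1 : μ {x : ℚ_[p] | ‖x‖ ≤ 1} = 1) (c : ℚ_[p]) (δ : ℝ) (hδ : 0 < δ) :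
    μ {x : ℚ_[p] | ‖x - c‖ < δ} ≤ ENNReal.ofReal δ := by
  haveI := hμ
  have hp1 : (1:ℝ) < (p:ℝ) := by exact_mod_cast (Fact.out : p.Prime).one_lt
  have hp0 : (0:ℝ) < (p:ℝ) := by positivity
  set n : ℤ := ⌊Real.logb p δ⌋ with hn
  have hpn : (p:ℝ) ^ n ≤ δ := by
    have h1 : (p:ℝ) ^ n = (p:ℝ) ^ ((n:ℝ)) := (Real.rpow_intCast _ _).symm
    rw [h1]
    calc (p:ℝ) ^ ((n:ℝ)) ≤ (p:ℝ) ^ (Real.logb p δ) :=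
          Real.rpow_le_rpow_of_exponent_le (le_of_lt hp1) (Int.floor_le _)
      _ = δ := Real.rpow_logb hp0 (ne_of_gt hp1) hδ
  have hsub : {x : ℚ_[p] | ‖x - c‖ < δ} ⊆ {x : ℚ_[p] | ‖x - c‖ ≤ (p:ℝ) ^ n} := by
    intro x hx
    simp only [Set.mem_setOf_eq] at hx ⊢
    rcases eq_or_ne x c with h|h
    · simp [h]; positivity
    · have hxc : x - c ≠ 0 := sub_ne_zero.mpr h
      rw [Padic.norm_eq_zpow_neg_valuation hxc] at hx ⊢
      have hlt : ((-(x - c).valuation : ℤ) : ℝ) < Real.logb p δ := by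
        rw [Real.lt_logb_iff_rpow_lt hp1 hδ, Real.rpow_intCast]
        exact hx
      have hle : -(x - c).valuation ≤ n := Int.le_floor.mpr (le_of_lt hlt)
      exact zpow_le_zpow_right₀ (le_of_lt hp1) hle
  have htrans : μ {x : ℚ_[p] | ‖x - c‖ ≤ (p:ℝ)^n} = μ {x : ℚ_[p] | ‖x‖ ≤ (p:ℝ)^n} := by
    have : {x : ℚ_[p] | ‖x - c‖ ≤ (p:ℝ)^n}
        = (fun x => -c + x) ⁻¹' {x : ℚ_[p] | ‖x‖ ≤ (p:ℝ)^n} := by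
      ext x; simp only [Set.mem_preimage, Set.mem_setOf_eq, neg_add_eq_sub]
    rw [this, measure_preimage_add]
  calc μ {x : ℚ_[p] | ‖x - c‖ < δ} ≤ μ {x : ℚ_[p] | ‖x - c‖ ≤ (p:ℝ) ^ n} := measure_mono hsub
    _ = ENNReal.ofReal ((p:ℝ)^n) := by rw [htrans]; exact padic_ball_meas p μ hμ hμ1 n
    _ ≤ ENNReal.ofReal δ := ENNReal.ofReal_le_ofReal hpn

lemma padic_norm_sum_lt_one {p : ℕ} [Fact p.Prime] {ι : Type*} (s : Finset ι) (f : ι → ℚ_[p])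
    (h : ∀ i ∈ s, ‖f i‖ < 1) : ‖∑ i ∈ s, f i‖ < 1 := by
  classical
  induction s using Finset.induction_on with
  | empty => simp
  | insert a s hx ih =>
      rw [Finset.sum_insert hx]
      exact lt_of_le_of_lt (Padic.nonarchimedean _ _)
        (max_lt (h _ (Finset.mem_insert_self _ _))
          (ih fun i hi => h i (Finset.mem_insert_of_mem hi)))

/-- Via Lagrange interpolation: a `δ`-separated set inside `{‖P(z)‖ < ε}` has at most
`deg P` elements, where `δ = ε^(1/deg P)`. -/
lemma padic_sep_card_le (p : ℕ) [Fact p.Prime] (P : Polynomial ℚ_[p]) (hP : P.Monic)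
    (hdeg : 1 ≤ P.natDegree) (ε : ℝ) (hε : 0 < ε) (T : Finset ℚ_[p])
    (hTS : ∀ t ∈ T, ‖P.eval t‖ < ε)
    (hsep : (T : Set ℚ_[p]).Pairwise fun a b => ε ^ (1 / (P.natDegree : ℝ)) ≤ ‖a - b‖) :
    T.card ≤ P.natDegree := by
  classical
  set l := P.natDegree with hl
  set δ : ℝ := ε ^ (1 / (l : ℝ)) with hδdef
  have hδ : 0 < δ := Real.rpow_pos_of_pos hε _
  have hδl : δ ^ l = ε := by
    rw [hδdef, ← Real.rpow_natCast (ε ^ (1 / (l:ℝ))) l, ← Real.rpow_mul hε.le,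
      one_div_mul_cancel (Nat.cast_ne_zero.mpr (by omega) : (l:ℝ) ≠ 0), Real.rpow_one]
  by_contra hcon
  push_neg at hcon
  obtain ⟨T', hT'sub, hT'card⟩ := Finset.exists_subset_card_eq (n := l + 1) hcon
  have hvs : Set.InjOn id (T' : Set ℚ_[p]) := fun _ _ _ _ h => h
  have hdegP : P.degree < (T'.card : ℕ) := by
    rw [hT'card, Polynomial.degree_eq_natDegree hP.ne_zero]
    exact_mod_cast lt_add_one l
  have key := Lagrange.eq_interpolate hvs hdegP
  have hco := congrArg (fun Q : Polynomial ℚ_[p] => Q.coeff l) key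
  simp only [Lagrange.interpolate_apply, Polynomial.finset_sum_coeff,
    Polynomial.coeff_C_mul, id] at hco
  have hPl : P.coeff l = 1 := hP.coeff_natDegree
  have hbasis : ∀ i ∈ T', (Lagrange.basis T' id i).coeff l
      = ∏ j ∈ T'.erase i, (i - j)⁻¹ := by
    intro i hi
    have hnd : (Lagrange.basis T' id i).natDegree = l := by
      rw [Lagrange.natDegree_basis hvs hi, hT'card]; omega
    rw [← hnd, ← Polynomial.leadingCoeff]
    rw [Lagrange.basis, Polynomial.leadingCoeff_prod]
    refine Finset.prod_congr rfl fun j hj => ?_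
    rw [Lagrange.basisDivisor, Polynomial.leadingCoeff_mul, Polynomial.leadingCoeff_C,
      (Polynomial.monic_X_sub_C _).leadingCoeff, mul_one]
    rfl
  have hsum : (1 : ℚ_[p]) = ∑ i ∈ T', P.eval i * ∏ j ∈ T'.erase i, (i - j)⁻¹ := by
    rw [← hPl]
    rw [hco]
    exact Finset.sum_congr rfl fun i hi => by rw [hbasis i hi]
  have hterm : ∀ i ∈ T', ‖P.eval i * ∏ j ∈ T'.erase i, (i - j)⁻¹‖ < 1 := by
    intro i hi
    rw [norm_mul]
    have hprod : ‖∏ j ∈ T'.erase i, (i - j)⁻¹‖ ≤ (δ ^ l)⁻¹ := by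
      rw [norm_prod]
      have hcarde : (T'.erase i).card = l := by rw [Finset.card_erase_of_mem hi, hT'card]; omega
      calc ∏ j ∈ T'.erase i, ‖(i - j)⁻¹‖ ≤ ∏ _j ∈ T'.erase i, δ⁻¹ := by
            refine Finset.prod_le_prod (fun j _ => norm_nonneg _) fun j hj => ?_
            rw [norm_inv]
            refine inv_anti₀ hδ ?_
            exact hsep (hT'sub hi) (hT'sub (Finset.mem_erase.mp hj).2)
              (Ne.symm (Finset.mem_erase.mp hj).1)
          _ = (δ ^ l)⁻¹ := by rw [Finset.prod_const, hcarde, inv_pow]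
    calc ‖P.eval i‖ * ‖∏ j ∈ T'.erase i, (i - j)⁻¹‖
        ≤ ‖P.eval i‖ * (δ ^ l)⁻¹ := mul_le_mul_of_nonneg_left hprod (norm_nonneg _)
      _ < ε * (δ ^ l)⁻¹ := mul_lt_mul_of_pos_right (hTS i (hT'sub hi)) (by positivity)
      _ = 1 := by rw [hδl]; field_simp
  have : ‖(1 : ℚ_[p])‖ < 1 := by
    rw [hsum]
    exact padic_norm_sum_lt_one _ _ hterm
  simp at this

/-- Let `p` be a prime and `P ∈ ℚ_p[X]` a monic polynomial of degree `l ≥ 1`.  Then for every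
`ε > 0` the Haar measure (normalized so that `ℤ_p` has measure 1) of
`{z ∈ ℚ_p : |P(z)|_p < ε}` is at most `l · ε^{1/l}`. -/
theorem measure_monic_sublevel (p : ℕ) [Fact p.Prime]
    (μ : Measure ℚ_[p]) (hμ : μ.IsAddHaarMeasure)
    (hμ1 : μ {x : ℚ_[p] | ‖x‖ ≤ 1} = 1)
    (P : Polynomial ℚ_[p]) (hP : P.Monic) (hdeg : 1 ≤ P.natDegree)
    (ε : ℝ) (hε : 0 < ε) :
    μ {z : ℚ_[p] | ‖P.eval z‖ < ε} ≤
      ENNReal.ofReal ((P.natDegree : ℝ) * ε ^ (1 / (P.natDegree : ℝ))) := by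
  classical
  haveI := hμ
  set l := P.natDegree with hl
  set δ : ℝ := ε ^ (1 / (l : ℝ)) with hδdef
  have hδ : 0 < δ := Real.rpow_pos_of_pos hε _
  set S := {z : ℚ_[p] | ‖P.eval z‖ < ε} with hS
  set C : Set ℕ := {n | ∃ T : Finset ℚ_[p], (∀ t ∈ T, t ∈ S) ∧
      ((T : Set ℚ_[p]).Pairwise fun a b => δ ≤ ‖a - b‖) ∧ T.card = n} with hC
  have hCbdd : ∀ n ∈ C, n ≤ l := by
    rintro n ⟨T, hT1, hT2, hT3⟩
    rw [← hT3]
    exact padic_sep_card_le p P hP hdeg ε hε T (fun t ht => hT1 t ht) hT2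
  have hbdd : BddAbove C := ⟨l, fun n hn => hCbdd n hn⟩
  have hne : C.Nonempty := ⟨0, ∅, by simp, by simp, rfl⟩
  obtain ⟨T, hT1, hT2, hT3⟩ := Nat.sSup_mem hne hbdd
  have hcover : S ⊆ ⋃ t ∈ T, {x : ℚ_[p] | ‖x - t‖ < δ} := by
    intro z hz
    by_contra hzc
    simp only [Set.mem_iUnion, Set.mem_setOf_eq, not_exists, not_lt] at hzc
    have hzT : z ∉ T := by
      intro h
      have := hzc z h
      simp only [sub_self, norm_zero] at this
      exact absurd this (not_le.mpr hδ)
    have hmemC : T.card + 1 ∈ C := by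
      refine ⟨insert z T, ?_, ?_, ?_⟩
      · intro t ht
        rcases Finset.mem_insert.mp ht with h|h
        · rwa [h]
        · exact hT1 t h
      · rw [Finset.coe_insert]
        rw [Set.pairwise_insert]
        exact ⟨hT2, fun b hb _ => ⟨hzc b hb, by rw [norm_sub_rev]; exact hzc b hb⟩⟩
      · rw [Finset.card_insert_of_notMem hzT]
    have := le_csSup hbdd hmemC
    rw [hT3] at this
    omega
  calc μ S ≤ μ (⋃ t ∈ T, {x : ℚ_[p] | ‖x - t‖ < δ}) := measure_mono hcover
    _ ≤ ∑ t ∈ T, μ {x : ℚ_[p] | ‖x - t‖ < δ} := measure_biUnion_finset_le T _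
    _ ≤ ∑ _t ∈ T, ENNReal.ofReal δ :=
        Finset.sum_le_sum fun t _ => padic_open_ball_meas p μ hμ hμ1 t δ hδ
    _ = (T.card : ℝ≥0∞) * ENNReal.ofReal δ := by rw [Finset.sum_const, nsmul_eq_mul]
    _ ≤ (l : ℝ≥0∞) * ENNReal.ofReal δ := by
        gcongr
        exact_mod_cast hCbdd T.card ⟨T, hT1, hT2, rfl⟩
    _ = ENNReal.ofReal ((l : ℝ) * δ) := by
        rw [ENNReal.ofReal_mul (by positivity), ENNReal.ofReal_natCast]
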